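/- Eigenfunction property of generalized Meixner polynomials under the intertwining kernel: let 𝕀_φ f(n) = E[f(B(n, I))] where I is a [0,∞)-valued random variable with moments E[I^k] = σ₁^k k!/W_φ(k+1) and B(n, p) denotes a Binomial(n, p) random variable. Then 𝕀_φ p_k(n) = (σ₁^k k!/W_φ(k+1)) p_k(n) for all k, n ∈ ℤ≥0. -/

import Mathlib

open MeasureTheory

/-- The discrete dilation (binomial thinning) operator. -/
noncomputable def DD (α : ℝ) (f : ℕ → ℝ) (n : ℕ) : ℝ :=
  ∑ r ∈ Finset.range (n + 1), (n.choose r : ℝ) * α ^ r * (1 - α) ^ (n - r) * f r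

/-- The falling factorial `p_k(n) = n!/(n-k)!` (zero if `k > n`). -/
def pfall (k n : ℕ) : ℝ := (n.descFactorial k : ℝ)

lemma choose_descFactorial (n k r : ℕ) (hkr : k ≤ r) (hrn : r ≤ n) :
    n.choose r * r.descFactorial k = n.descFactorial k * (n - k).choose (r - k) := by
  rw [Nat.descFactorial_eq_factorial_mul_choose, Nat.descFactorial_eq_factorial_mul_choose]
  have := Nat.choose_mul (n := n) hkr
  calc n.choose r * (k.factorial * r.choose k)
      = k.factorial * (n.choose r * r.choose k) := by ring
    _ = k.factorial * (n.choose k * (n - k).choose (r - k)) := by rw [this]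
    _ = k.factorial * n.choose k * (n - k).choose (r - k) := by ring

lemma DD_pfall (x : ℝ) (k n : ℕ) : DD x (pfall k) n = x ^ k * pfall k n := by
  unfold DD pfall
  by_cases hkn : k ≤ n
  · have hsplit : (n : ℕ) + 1 = k + (n - k + 1) := by omega
    rw [hsplit, Finset.sum_range_add]
    have h1 : ∀ i ∈ Finset.range k,
        (n.choose i : ℝ) * x ^ i * (1 - x) ^ (n - i) * (i.descFactorial k : ℝ) = 0 := by
      intro i hi
      rw [Finset.mem_range] at hi
      rw [Nat.descFactorial_eq_zero_iff_lt.mpr hi]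
      simp
    rw [Finset.sum_congr rfl h1, Finset.sum_const_zero, zero_add]
    have h2 : ∀ j ∈ Finset.range (n - k + 1),
        (n.choose (k + j) : ℝ) * x ^ (k + j) * (1 - x) ^ (n - (k + j)) *
          ((k + j).descFactorial k : ℝ) =
        (n.descFactorial k : ℝ) * x ^ k *
          ((n - k).choose j * x ^ j * (1 - x) ^ (n - k - j)) := by
      intro j hj
      rw [Finset.mem_range] at hj
      have hrn : k + j ≤ n := by omega
      have key := choose_descFactorial n k (k + j) (Nat.le_add_right _ _) hrn
      have hkey : (n.choose (k + j) : ℝ) * ((k + j).descFactorial k : ℝ) =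
          (n.descFactorial k : ℝ) * ((n - k).choose j : ℝ) := by
        have : (k + j) - k = j := by omega
        rw [this] at key
        exact_mod_cast congrArg Nat.cast key
      have hsub : n - (k + j) = n - k - j := by omega
      rw [hsub, pow_add]
      linear_combination ((1 - x) ^ (n - k - j) * x ^ k * x ^ j) * hkey
    rw [Finset.sum_congr rfl h2, ← Finset.mul_sum]
    have hbin : ∑ j ∈ Finset.range (n - k + 1),
        ((n - k).choose j : ℝ) * x ^ j * (1 - x) ^ (n - k - j) = 1 := by
      calc ∑ j ∈ Finset.range (n - k + 1),
            ((n - k).choose j : ℝ) * x ^ j * (1 - x) ^ (n - k - j)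
          = ((x + (1 - x)) : ℝ) ^ (n - k) := by
            rw [add_pow]
            exact Finset.sum_congr rfl (fun j _ => by ring)
        _ = 1 := by norm_num
    rw [hbin]
    ring
  · push_neg at hkn
    rw [Nat.descFactorial_eq_zero_iff_lt.mpr hkn]
    rw [Finset.sum_eq_zero]
    · simp
    · intro i hi
      rw [Finset.mem_range] at hi
      rw [Nat.descFactorial_eq_zero_iff_lt.mpr (by omega)]
      simp

/-- Eigenfunction property of the intertwining kernel: let `𝕀_φ f(n) = E[f(B(n, I))]`
where `I` is a `[0,∞)`-valued random variable with moments
`E[I^k] = σ₁^k k!/W_φ(k+1)`. Then `𝕀_φ p_k = (σ₁^k k!/W_φ(k+1)) p_k`. -/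
theorem intertwining_kernel_eigen (φ : ℕ → ℝ) (σ1 : ℝ)
    (μ : Measure ℝ) [IsProbabilityMeasure μ]
    (hsupp : ∀ᵐ x ∂μ, 0 ≤ x)
    (hint : ∀ k : ℕ, Integrable (fun x => x ^ k) μ)
    (hmom : ∀ k : ℕ,
      ∫ x, x ^ k ∂μ =
        σ1 ^ k * (k.factorial : ℝ) / ∏ r ∈ Finset.range k, φ (r + 1)) :
    ∀ k n : ℕ,
      ∫ x, DD x (pfall k) n ∂μ =
        (σ1 ^ k * (k.factorial : ℝ) / ∏ r ∈ Finset.range k, φ (r + 1)) *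
          pfall k n := by
  intro k n
  have heq : ∀ x : ℝ, DD x (pfall k) n = x ^ k * pfall k n := fun x => DD_pfall x k n
  calc ∫ x, DD x (pfall k) n ∂μ = ∫ x, x ^ k * pfall k n ∂μ := by
        simp_rw [heq]
    _ = (∫ x, x ^ k ∂μ) * pfall k n := by
        rw [integral_mul_const]
    _ = _ := by rw [hmom k]
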